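/- Let d ≤ n and let P be a d×n integer matrix of rank d such that P^T ω ∉ 2ℤ^n for every ω ∈ {0,1}^d \ {0}. Let a^H : ℤ^n → ℂ be the n-dimensional Haar low-pass filter and, for each ordered pair (γ₁, γ₂) of distinct elements of {0,1}^n, let b_{γ₁,γ₂} := 2^{-n}(δ_{γ₁} − δ_{γ₂}). Then the projected filters form a d-dimensional tight framelet filter bank: for all γ ∈ {0,1}^d and all n' ∈ ℤ^d, Σ_{k∈ℤ^d} (Pa^H)(γ+2k)·conj((Pa^H)(n'+γ+2k)) + (1/2)·Σ_{(γ₁,γ₂): γ₁,γ₂∈{0,1}^n, γ₁≠γ₂} Σ_{k∈ℤ^d} (P b_{γ₁,γ₂})(γ+2k)·conj((P b_{γ₁,γ₂})(n'+γ+2k)) = 2^{-d}·δ(n'). -/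

import Mathlib

open scoped BigOperators

/-- The `n`-dimensional Haar low-pass filter: value `2^{-n}` on `{0,1}^n ⊆ ℤ^n`. -/
noncomputable def haarFilter (n : ℕ) : (Fin n → ℤ) → ℂ :=
  fun k => if ∀ i, k i = 0 ∨ k i = 1 then ((2 : ℂ) ^ n)⁻¹ else 0

/-- Embedding of `{0,1}^n` (modeled by `Fin n → Bool`) into `ℤ^n`. -/
def boolToInt {n : ℕ} (γ : Fin n → Bool) : Fin n → ℤ :=
  fun i => if γ i then 1 else 0

/-- The high-pass filter `2^{-n}(δ_{γ₁} - δ_{γ₂})`. -/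
noncomputable def haarHighPass (n : ℕ) (γ₁ γ₂ : Fin n → ℤ) : (Fin n → ℤ) → ℂ :=
  fun k => ((2 : ℂ) ^ n)⁻¹ * ((if k = γ₁ then 1 else 0) - (if k = γ₂ then 1 else 0))

/-- The projected filter `(Pa)(j) := Σ_{k ∈ ℤ^n, Pk = j} a(k)`. -/
noncomputable def projFilter {d n : ℕ} (P : Matrix (Fin d) (Fin n) ℤ)
    (a : (Fin n → ℤ) → ℂ) : (Fin d → ℤ) → ℂ :=
  fun j => ∑ᶠ (k : Fin n → ℤ) (_ : P.mulVec k = j), a k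

section Aux

open Matrix

lemma cast_mulVec {d n : ℕ} (P : Matrix (Fin d) (Fin n) ℤ) (v : Fin n → ℤ) (j : Fin d) :
    ((P.mulVec v j : ℤ) : ZMod 2)
      = (P.map (Int.cast : ℤ → ZMod 2)).mulVec (fun i => ((v i : ℤ) : ZMod 2)) j := by
  simp [Matrix.mulVec, dotProduct, Matrix.map_apply]

lemma zmod2_val_cast (a : ZMod 2) : ((a.val : ℤ) : ZMod 2) = a := by
  rw [Int.cast_natCast, ZMod.natCast_val, ZMod.cast_id]

lemma surj_of_hP (d n : ℕ) (P : Matrix (Fin d) (Fin n) ℤ)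
    (hP : ∀ ω : Fin d → ℤ, (∀ i, ω i = 0 ∨ ω i = 1) → ω ≠ 0 →
      ¬ ∀ j, (2 : ℤ) ∣ P.transpose.mulVec ω j) :
    Function.Surjective (P.map (Int.cast : ℤ → ZMod 2)).mulVecLin := by
  set Q := P.map (Int.cast : ℤ → ZMod 2) with hQ
  have hker : LinearMap.ker Qᵀ.mulVecLin = ⊥ := by
    rw [Matrix.ker_mulVecLin_eq_bot_iff]
    intro w hw
    by_contra hw0
    have hcast : ∀ j, (((Pᵀ *ᵥ fun i => ((w i).val : ℤ)) j : ℤ) : ZMod 2) = 0 := by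
      intro j
      rw [cast_mulVec]
      have h1 : (fun i => ((((w i).val : ℤ)) : ZMod 2)) = w := by
        funext i; exact zmod2_val_cast (w i)
      have h2 : (P.transpose).map (Int.cast : ℤ → ZMod 2) = Qᵀ := by
        rw [hQ]; ext i j'; simp [Matrix.transpose_apply, Matrix.map_apply]
      rw [h1, h2]
      exact congrFun hw j
    refine hP (fun j => ((w j).val : ℤ)) (fun j => ?_) ?_ (fun j => ?_)
    · show ((w j).val : ℤ) = 0 ∨ ((w j).val : ℤ) = 1
      have : (w j).val < 2 := (w j).val_lt
      omega
    · intro h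
      apply hw0
      funext j
      have := congrFun h j
      simp only [Pi.zero_apply, Int.natCast_eq_zero] at this
      have h2 : ((((w j).val : ℤ)) : ZMod 2) = 0 := by rw [this]; simp
      rw [zmod2_val_cast] at h2
      simpa using h2
    · have := (ZMod.intCast_zmod_eq_zero_iff_dvd _ 2).mp (hcast j)
      exact_mod_cast this
  have hinj : Function.Injective Qᵀ.mulVecLin := LinearMap.ker_eq_bot.mp hker
  have hrT : Qᵀ.rank = d := by
    rw [Matrix.rank, LinearMap.finrank_range_of_inj hinj]
    simp [Module.finrank_pi]
  have hr : Q.rank = d := by rw [← Matrix.rank_transpose]; exact hrT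
  have htop : LinearMap.range Q.mulVecLin = ⊤ := by
    apply Submodule.eq_top_of_finrank_eq
    rw [← Matrix.rank, hr]
    simp [Module.finrank_pi]
  exact LinearMap.range_eq_top.mp htop

lemma fiber_card (d n : ℕ) (hdn : d ≤ n) (Q : Matrix (Fin d) (Fin n) (ZMod 2))
    (hsurj : Function.Surjective Q.mulVecLin) (y : Fin d → ZMod 2) :
    (Finset.univ.filter (fun x : Fin n → ZMod 2 => Q.mulVec x = y)).card = 2^(n-d) := by
  classical
  obtain ⟨x₀, hx₀⟩ := hsurj y
  have hrange : LinearMap.range Q.mulVecLin = ⊤ := LinearMap.range_eq_top.mpr hsurj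
  have hfr : Module.finrank (ZMod 2) (LinearMap.ker Q.mulVecLin) = n - d := by
    have h1 := LinearMap.finrank_range_add_finrank_ker Q.mulVecLin
    rw [hrange] at h1
    simp [Module.finrank_pi] at h1
    omega
  have hcard : Fintype.card (LinearMap.ker Q.mulVecLin) = 2 ^ (n - d) := by
    have := Module.card_eq_pow_finrank (K := ZMod 2) (V := LinearMap.ker Q.mulVecLin)
    rwa [ZMod.card, hfr] at this
  have e : {x : Fin n → ZMod 2 // Q.mulVec x = y} ≃ LinearMap.ker Q.mulVecLin :=
    { toFun := fun x => ⟨x.1 - x₀, by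
        rw [LinearMap.mem_ker, map_sub, hx₀]
        rw [show Q.mulVecLin x.1 = Q.mulVec x.1 from rfl, x.2]
        simp⟩
      invFun := fun z => ⟨z.1 + x₀, by
        have hz := LinearMap.mem_ker.mp z.2
        show Q.mulVecLin (z.1 + x₀) = y
        rw [map_add, hz, hx₀]; simp⟩
      left_inv := fun x => by ext; simp
      right_inv := fun z => by ext; simp }
  rw [← Fintype.card_subtype, Fintype.card_congr e, hcard]

lemma bool_count (d n : ℕ) (hdn : d ≤ n) (P : Matrix (Fin d) (Fin n) ℤ)
    (hP : ∀ ω : Fin d → ℤ, (∀ i, ω i = 0 ∨ ω i = 1) → ω ≠ 0 →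
      ¬ ∀ j, (2 : ℤ) ∣ P.transpose.mulVec ω j) (γ : Fin d → ℤ) :
    (Finset.univ.filter (fun γ' : Fin n → Bool =>
      ∀ i, (2:ℤ) ∣ (P.mulVec (boolToInt γ') i - γ i))).card = 2^(n-d) := by
  classical
  have hfib := fiber_card d n hdn (P.map (Int.cast : ℤ → ZMod 2)) (surj_of_hP d n P hP)
  set Q := P.map (Int.cast : ℤ → ZMod 2) with hQ
  rw [← hfib (fun i => ((γ i : ℤ) : ZMod 2))]
  apply Finset.card_bij' (fun γ' _ => fun i => (((boolToInt γ' i : ℤ) : ZMod 2)))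
    (fun x _ => fun i => if x i = 1 then true else false)
  · intro γ' hγ'
    simp only [Finset.mem_filter, Finset.mem_univ, true_and] at hγ' ⊢
    funext j
    rw [← cast_mulVec]
    have := hγ' j
    have h2 : (P.mulVec (boolToInt γ') j : ZMod 2) - ((γ j : ℤ) : ZMod 2) = 0 := by
      rw [← Int.cast_sub, ZMod.intCast_zmod_eq_zero_iff_dvd]
      exact_mod_cast this
    linear_combination h2
  · intro x hx
    simp only [Finset.mem_filter, Finset.mem_univ, true_and] at hx ⊢
    intro j
    have hb : (fun i => ((boolToInt (fun i => if x i = 1 then true else false) i : ℤ) : ZMod 2)) = x := by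
      funext i
      have hzm : ∀ a : ZMod 2, a = 0 ∨ a = 1 := by decide
      rcases hzm (x i) with h | h <;> simp [boolToInt, h]
    have hcast : ((P.mulVec (boolToInt (fun i => if x i = 1 then true else false)) j : ℤ) : ZMod 2) = ((γ j : ℤ) : ZMod 2) := by
      rw [cast_mulVec, hb, hx]
    have h0 : (((P.mulVec (boolToInt (fun i => if x i = 1 then true else false)) j - γ j : ℤ)) : ZMod 2) = 0 := by
      push_cast
      rw [hcast]
      ring
    have := (ZMod.intCast_zmod_eq_zero_iff_dvd _ 2).mp h0
    exact_mod_cast this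
  · intro γ' _
    funext i
    by_cases h : γ' i <;> simp [boolToInt, h]
  · intro x _
    funext i
    have hzm : ∀ a : ZMod 2, a = 0 ∨ a = 1 := by decide
    rcases hzm (x i) with h | h <;> simp [boolToInt, h]

lemma boolToInt_injective {n : ℕ} : Function.Injective (boolToInt (n := n)) := by
  intro a b h
  funext i
  have := congrFun h i
  by_cases ha : a i <;> by_cases hb : b i <;> simp_all [boolToInt]

lemma projFilter_eq_sum {d n : ℕ} (P : Matrix (Fin d) (Fin n) ℤ) (a : (Fin n → ℤ) → ℂ)
    (S : Finset (Fin n → ℤ)) (hS : ∀ k, a k ≠ 0 → k ∈ S) (j : Fin d → ℤ) :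
    projFilter P a j = ∑ k ∈ S, if P.mulVec k = j then a k else 0 := by
  classical
  unfold projFilter
  rw [finsum_congr (fun k => finsum_eq_if (p := P.mulVec k = j) (x := a k))]
  apply finsum_eq_finset_sum_of_support_subset
  intro k hk
  simp only [Function.mem_support] at hk
  by_cases h : P.mulVec k = j
  · simp only [h, if_true] at hk; exact hS k hk
  · simp [h] at hk

lemma projFilter_haar {d n : ℕ} (P : Matrix (Fin d) (Fin n) ℤ) (j : Fin d → ℤ) :
    projFilter P (haarFilter n) j
      = ((2 : ℂ) ^ n)⁻¹ * ∑ γ' : Fin n → Bool,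
          (if P.mulVec (boolToInt γ') = j then 1 else 0) := by
  classical
  rw [projFilter_eq_sum P _ (Finset.univ.image boolToInt)]
  · rw [Finset.sum_image (fun a _ b _ h => boolToInt_injective h), Finset.mul_sum]
    apply Finset.sum_congr rfl
    intro γ' _
    have hh : haarFilter n (boolToInt γ') = ((2 : ℂ) ^ n)⁻¹ := by
      unfold haarFilter boolToInt
      rw [if_pos]
      intro i; by_cases h : γ' i <;> simp [h]
    rw [hh]
    by_cases h : P.mulVec (boolToInt γ') = j <;> simp [h]
  · intro k hk
    unfold haarFilter at hk
    by_cases h : ∀ i, k i = 0 ∨ k i = 1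
    · simp only [Finset.mem_image, Finset.mem_univ, true_and]
      refine ⟨fun i => k i = 1, ?_⟩
      funext i
      rcases h i with h0 | h1
      · simp [boolToInt, h0]
      · simp [boolToInt, h1]
    · simp [h] at hk

lemma projFilter_highPass {d n : ℕ} (P : Matrix (Fin d) (Fin n) ℤ)
    (g₁ g₂ : Fin n → ℤ) (j : Fin d → ℤ) :
    projFilter P (haarHighPass n g₁ g₂) j
      = ((2 : ℂ) ^ n)⁻¹ * ((if P.mulVec g₁ = j then 1 else 0)
          - (if P.mulVec g₂ = j then 1 else 0)) := by
  classical
  rw [projFilter_eq_sum P _ ({g₁, g₂} : Finset _)]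
  · by_cases h : g₁ = g₂
    · subst h
      simp [haarHighPass]
    · rw [Finset.sum_pair h]
      unfold haarHighPass
      simp only [if_pos rfl, if_neg h, if_neg (Ne.symm h)]
      by_cases h1 : P.mulVec g₁ = j <;> by_cases h2 : P.mulVec g₂ = j <;>
        simp [h1, h2] <;> ring
  · intro k hk
    unfold haarHighPass at hk
    simp only [Finset.mem_insert, Finset.mem_singleton]
    by_contra hc
    push_neg at hc
    simp [hc.1, hc.2] at hk

lemma pair_expand {α : Type*} [Fintype α] (a b : α → ℂ) :
    ∑ x : α, ∑ y : α, (a x - a y) * (b x - b y)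
      = 2 * (Fintype.card α : ℂ) * (∑ x, a x * b x)
        - 2 * (∑ x, a x) * (∑ x, b x) := by
  have h : ∀ x y : α, (a x - a y) * (b x - b y)
      = a x * b x + a y * b y - a x * b y - a y * b x := by intros; ring
  simp_rw [h]
  simp only [Finset.sum_sub_distrib, Finset.sum_add_distrib, Finset.sum_const,
    Finset.card_univ, nsmul_eq_mul, ← Finset.sum_mul, ← Finset.mul_sum]
  ring

lemma per_k {α : Type*} [Fintype α] (c : ℂ) (a b : α → ℂ) :
    (c * ∑ x, a x) * (c * ∑ x, b x)
      + (1/2 : ℂ) * ∑ x : α, ∑ y : α, (c * (a x - a y)) * (c * (b x - b y))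
      = c * c * (Fintype.card α : ℂ) * ∑ x, a x * b x := by
  have h1 : ∀ x y : α, (c * (a x - a y)) * (c * (b x - b y))
      = c * c * ((a x - a y) * (b x - b y)) := by intros; ring
  simp_rw [h1, ← Finset.mul_sum]
  rw [pair_expand]
  ring

end Aux

/-- Projecting the `n`-dimensional directional Haar tight framelet filter bank by a
`d × n` integer matrix `P` of rank `d` with `Pᵀω ∉ 2ℤ^n` for all `ω ∈ {0,1}^d \ {0}`
gives a `d`-dimensional tight framelet filter bank (ordered pairs counted with a factor
`1/2`). -/
theorem projected_haar_tffb (d n : ℕ) (hdn : d ≤ n) (P : Matrix (Fin d) (Fin n) ℤ)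
    (hrank : P.rank = d)
    (hP : ∀ ω : Fin d → ℤ, (∀ i, ω i = 0 ∨ ω i = 1) → ω ≠ 0 →
      ¬ ∀ j, (2 : ℤ) ∣ P.transpose.mulVec ω j)
    (γ : Fin d → ℤ) (hγ : ∀ i, γ i = 0 ∨ γ i = 1) (n' : Fin d → ℤ) :
    (∑ᶠ k : Fin d → ℤ,
        projFilter P (haarFilter n) (fun i => γ i + 2 * k i) *
          (starRingEnd ℂ) (projFilter P (haarFilter n) (fun i => n' i + γ i + 2 * k i))) +
      (1 / 2 : ℂ) *
        ∑ γ₁ : Fin n → Bool, ∑ γ₂ : Fin n → Bool,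
          (if γ₁ ≠ γ₂ then
            ∑ᶠ k : Fin d → ℤ,
              projFilter P (haarHighPass n (boolToInt γ₁) (boolToInt γ₂))
                  (fun i => γ i + 2 * k i) *
                (starRingEnd ℂ)
                  (projFilter P (haarHighPass n (boolToInt γ₁) (boolToInt γ₂))
                    (fun i => n' i + γ i + 2 * k i))
          else 0) =
      ((2 : ℂ) ^ d)⁻¹ * (if n' = 0 then 1 else 0) := by
  classical
  set c : ℂ := ((2 : ℂ) ^ n)⁻¹ with hc
  -- indicator
  set I : (Fin n → Bool) → (Fin d → ℤ) → ℂ :=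
    fun g j => if P.mulVec (boolToInt g) = j then 1 else 0 with hI
  -- conjugation lemmas
  have hconj0 : (starRingEnd ℂ) c = c := by
    rw [hc, map_inv₀, map_pow]
    norm_num
    rw [show ((2:ℂ)) = ((2:ℝ) : ℂ) by norm_num, Complex.conj_ofReal]
  have hconj1 : ∀ j, (starRingEnd ℂ) (projFilter P (haarFilter n) j)
      = c * ∑ g : Fin n → Bool, I g j := by
    intro j
    rw [projFilter_haar, map_mul, hconj0, map_sum]
    congr 1
    apply Finset.sum_congr rfl
    intro g _
    rw [hI]
    by_cases h : P.mulVec (boolToInt g) = j <;> simp [h]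
  have hconj2 : ∀ g₁ g₂ j, (starRingEnd ℂ)
        (projFilter P (haarHighPass n (boolToInt g₁) (boolToInt g₂)) j)
      = c * (I g₁ j - I g₂ j) := by
    intro g₁ g₂ j
    rw [projFilter_highPass, map_mul, hconj0, map_sub]
    congr 1
    by_cases h1 : P.mulVec (boolToInt g₁) = j <;>
      by_cases h2 : P.mulVec (boolToInt g₂) = j <;> simp [hI, h1, h2]
  -- the support finset for k-sums
  set S : Finset (Fin d → ℤ) := Finset.univ.image
      (fun p : (Fin n → Bool) × Bool =>
        fun i => (P.mulVec (boolToInt p.1) i - γ i - (if p.2 then n' i else 0)) / 2) with hSdef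
  have hS1 : ∀ (k : Fin d → ℤ) (g : Fin n → Bool),
      P.mulVec (boolToInt g) = (fun i => γ i + 2 * k i) → k ∈ S := by
    intro k g hk
    rw [hSdef]
    simp only [Finset.mem_image, Finset.mem_univ, true_and]
    refine ⟨(g, false), ?_⟩
    funext i
    have h := congrFun hk i
    simp only [Bool.false_eq_true, if_false]
    rw [h]
    omega
  have hS2 : ∀ (k : Fin d → ℤ) (g : Fin n → Bool),
      P.mulVec (boolToInt g) = (fun i => n' i + γ i + 2 * k i) → k ∈ S := by
    intro k g hk
    rw [hSdef]
    simp only [Finset.mem_image, Finset.mem_univ, true_and]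
    refine ⟨(g, true), ?_⟩
    funext i
    have h := congrFun hk i
    simp only [if_true]
    rw [h]
    omega
  -- Term 1
  have hT1 : (∑ᶠ k : Fin d → ℤ,
        projFilter P (haarFilter n) (fun i => γ i + 2 * k i) *
          (starRingEnd ℂ) (projFilter P (haarFilter n) (fun i => n' i + γ i + 2 * k i)))
      = ∑ k ∈ S, (c * ∑ g₁ : Fin n → Bool, I g₁ (fun i => γ i + 2 * k i))
          * (c * ∑ g₂ : Fin n → Bool, I g₂ (fun i => n' i + γ i + 2 * k i)) := by
    rw [finsum_congr (fun k => by
      rw [projFilter_haar, hconj1])]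
    apply finsum_eq_finset_sum_of_support_subset
    intro k hk
    simp only [Function.mem_support] at hk
    have h1 : (∑ g₁ : Fin n → Bool, I g₁ (fun i => γ i + 2 * k i)) ≠ 0 := by
      intro h; apply hk; rw [h]; ring
    obtain ⟨g, _, hg⟩ := Finset.exists_ne_zero_of_sum_ne_zero h1
    rw [hI] at hg
    by_cases h : P.mulVec (boolToInt g) = (fun i => γ i + 2 * k i)
    · exact hS1 k g h
    · simp [h] at hg
  -- Term 2 summands
  have hT2 : ∀ g₁ g₂ : Fin n → Bool, (∑ᶠ k : Fin d → ℤ,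
        projFilter P (haarHighPass n (boolToInt g₁) (boolToInt g₂))
            (fun i => γ i + 2 * k i) *
          (starRingEnd ℂ)
            (projFilter P (haarHighPass n (boolToInt g₁) (boolToInt g₂))
              (fun i => n' i + γ i + 2 * k i)))
      = ∑ k ∈ S,
          (c * (I g₁ (fun i => γ i + 2 * k i) - I g₂ (fun i => γ i + 2 * k i)))
          * (c * (I g₁ (fun i => n' i + γ i + 2 * k i) - I g₂ (fun i => n' i + γ i + 2 * k i))) := by
    intro g₁ g₂
    rw [finsum_congr (fun k => by
      rw [projFilter_highPass, hconj2])]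
    apply finsum_eq_finset_sum_of_support_subset
    intro k hk
    simp only [Function.mem_support] at hk
    have h1 : (I g₁ (fun i => γ i + 2 * k i) - I g₂ (fun i => γ i + 2 * k i)) ≠ 0 := by
      intro h; apply hk; rw [h]; ring
    rw [hI] at h1
    by_cases ha : P.mulVec (boolToInt g₁) = (fun i => γ i + 2 * k i)
    · exact hS1 k g₁ ha
    · by_cases hb : P.mulVec (boolToInt g₂) = (fun i => γ i + 2 * k i)
      · exact hS1 k g₂ hb
      · simp [ha, hb] at h1
  rw [hT1]
  have hT2' : ∀ g₁ g₂ : Fin n → Bool,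
      (if g₁ ≠ g₂ then (∑ᶠ k : Fin d → ℤ,
        projFilter P (haarHighPass n (boolToInt g₁) (boolToInt g₂))
            (fun i => γ i + 2 * k i) *
          (starRingEnd ℂ)
            (projFilter P (haarHighPass n (boolToInt g₁) (boolToInt g₂))
              (fun i => n' i + γ i + 2 * k i))) else 0)
      = ∑ k ∈ S,
          (c * (I g₁ (fun i => γ i + 2 * k i) - I g₂ (fun i => γ i + 2 * k i)))
          * (c * (I g₁ (fun i => n' i + γ i + 2 * k i) - I g₂ (fun i => n' i + γ i + 2 * k i))) := by
    intro g₁ g₂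
    by_cases h : g₁ = g₂
    · subst h
      simp
    · rw [if_pos h, hT2]
  simp only [hT2']
  -- swap sums : ∑ g₁ ∑ g₂ ∑ k → ∑ k ∑ g₁ ∑ g₂
  rw [show (∑ g₁ : Fin n → Bool, ∑ g₂ : Fin n → Bool, ∑ k ∈ S,
          (c * (I g₁ (fun i => γ i + 2 * k i) - I g₂ (fun i => γ i + 2 * k i)))
          * (c * (I g₁ (fun i => n' i + γ i + 2 * k i) - I g₂ (fun i => n' i + γ i + 2 * k i))))
      = ∑ k ∈ S, ∑ g₁ : Fin n → Bool, ∑ g₂ : Fin n → Bool,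
          (c * (I g₁ (fun i => γ i + 2 * k i) - I g₂ (fun i => γ i + 2 * k i)))
          * (c * (I g₁ (fun i => n' i + γ i + 2 * k i) - I g₂ (fun i => n' i + γ i + 2 * k i))) from by
    rw [Finset.sum_congr rfl (fun g₁ _ => Finset.sum_comm)]
    exact Finset.sum_comm]
  rw [Finset.mul_sum, ← Finset.sum_add_distrib]
  -- per k identity
  have hper : ∀ k : Fin d → ℤ,
      (c * ∑ g₁ : Fin n → Bool, I g₁ (fun i => γ i + 2 * k i))
          * (c * ∑ g₂ : Fin n → Bool, I g₂ (fun i => n' i + γ i + 2 * k i))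
        + (1/2 : ℂ) * ∑ g₁ : Fin n → Bool, ∑ g₂ : Fin n → Bool,
          (c * (I g₁ (fun i => γ i + 2 * k i) - I g₂ (fun i => γ i + 2 * k i)))
          * (c * (I g₁ (fun i => n' i + γ i + 2 * k i) - I g₂ (fun i => n' i + γ i + 2 * k i)))
      = c * ∑ g : Fin n → Bool,
          I g (fun i => γ i + 2 * k i) * I g (fun i => n' i + γ i + 2 * k i) := by
    intro k
    rw [per_k c (fun g => I g (fun i => γ i + 2 * k i))
      (fun g => I g (fun i => n' i + γ i + 2 * k i))]
    have hcard : (Fintype.card (Fin n → Bool) : ℂ) = 2 ^ n := by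
      simp [Fintype.card_fun]
    rw [hcard]
    have : c * c * (2:ℂ)^n = c := by
      rw [hc]
      have h2 : ((2:ℂ)^n) ≠ 0 := pow_ne_zero _ two_ne_zero
      field_simp
    rw [this]
  simp only [hper]
  rw [← Finset.mul_sum]
  -- now case on n'
  by_cases hn' : n' = 0
  · subst hn'
    rw [if_pos rfl]
    simp only [Pi.zero_apply, zero_add]
    have hsq : ∀ (g : Fin n → Bool) (k : Fin d → ℤ),
        I g (fun i => γ i + 2 * k i) * I g (fun i => γ i + 2 * k i)
          = I g (fun i => γ i + 2 * k i) := by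
      intro g k
      rw [hI]
      by_cases h : P.mulVec (boolToInt g) = (fun i => γ i + 2 * k i) <;> simp [h]
    simp only [hsq]
    rw [Finset.sum_comm]
    have hinner : ∀ g : Fin n → Bool,
        (∑ k ∈ S, I g (fun i => γ i + 2 * k i))
          = if (∀ i, (2:ℤ) ∣ (P.mulVec (boolToInt g) i - γ i)) then 1 else 0 := by
      intro g
      by_cases hdvd : ∀ i, (2:ℤ) ∣ (P.mulVec (boolToInt g) i - γ i)
      · rw [if_pos hdvd]
        set k₀ : Fin d → ℤ := fun i => (P.mulVec (boolToInt g) i - γ i) / 2 with hk₀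
        have hPk₀ : P.mulVec (boolToInt g) = (fun i => γ i + 2 * k₀ i) := by
          funext i
          rw [hk₀]
          obtain ⟨m, hm⟩ := hdvd i
          simp only
          omega
        have hmem : k₀ ∈ S := hS1 k₀ g hPk₀
        have hiff : ∀ k : Fin d → ℤ,
            (P.mulVec (boolToInt g) = (fun i => γ i + 2 * k i)) ↔ k = k₀ := by
          intro k
          constructor
          · intro h
            funext i
            have h1 := congrFun h i
            have h2 := congrFun hPk₀ i
            omega
          · intro h; rw [h]; exact hPk₀
        have : ∀ k : Fin d → ℤ, I g (fun i => γ i + 2 * k i) = if k = k₀ then 1 else 0 := by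
          intro k
          rw [hI]
          simp only [hiff k]
        simp only [this]
        rw [Finset.sum_ite_eq' S k₀ (fun _ => (1:ℂ))]
        rw [if_pos hmem]
      · rw [if_neg hdvd]
        apply Finset.sum_eq_zero
        intro k _
        rw [hI]
        simp only
        rw [if_neg]
        intro h
        apply hdvd
        intro i
        have := congrFun h i
        exact ⟨k i, by omega⟩
    simp only [hinner]
    rw [Finset.sum_boole]
    simp only [Finset.sum_const, nsmul_eq_mul, mul_one]
    rw [bool_count d n hdn P hP γ]
    have h2 : ((2:ℂ))^n ≠ 0 := pow_ne_zero _ two_ne_zero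
    have hd2 : ((2:ℂ))^d ≠ 0 := pow_ne_zero _ two_ne_zero
    rw [hc]
    push_cast
    rw [show (2:ℂ)^n = 2^(n-d) * 2^d from by rw [← pow_add]; congr 1; omega]
    rw [mul_inv]
    field_simp
  · rw [if_neg hn']
    rw [mul_zero]
    rw [Finset.sum_eq_zero, mul_zero]
    intro k _
    apply Finset.sum_eq_zero
    intro g _
    rw [hI]
    simp only
    by_cases h1 : P.mulVec (boolToInt g) = (fun i => γ i + 2 * k i)
    · rw [if_pos h1]
      rw [if_neg, one_mul]
      intro h2
      apply hn'
      funext i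
      have ha := congrFun h1 i
      have hb := congrFun h2 i
      simp only [Pi.zero_apply] at ha hb ⊢
      omega
    · rw [if_neg h1, zero_mul]
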